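/- Let (𝒱, J) be an essentially small site and let (ℬ, F) be a base for 𝒱, and equip ℬ with the F-induced topology. For any presheaf of sets 𝒫 on 𝒱, the restriction along F of the J-sheafification of 𝒫 is naturally isomorphic to the sheafification, for the F-induced topology, of the restriction of 𝒫 along F; that is, (𝒫^a) ∘ F^op ≅ (𝒫 ∘ F^op)^a, where (−)^a denotes sheafification for the respective topologies. -/

import Mathlib

open CategoryTheory

universe u

/-- Property (⋆) of Beilinson for families of pairs indexed by `Fin n`:
for every object `X` of `V` and every finite family of pairs `(Bo α, f α)` with
`f α : X ⟶ F.obj (Bo α)`, there exist objects `B' β` of `B` and morphisms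
`g β : F.obj (B' β) ⟶ X` generating a `J`-covering sieve of `X`, such that every
composite `g β ≫ f α` is the image under `F` of a morphism `B' β ⟶ Bo α`. -/
def StarPropertyOn {B V : Type u} [SmallCategory B] [SmallCategory V]
    (F : B ⥤ V) (J : GrothendieckTopology V) (n : ℕ) : Prop :=
  ∀ (X : V) (Bo : Fin n → B) (f : ∀ α, X ⟶ F.obj (Bo α)),
    ∃ (ι : Type u) (B' : ι → B) (g : ∀ β, F.obj (B' β) ⟶ X),
      Sieve.ofArrows (fun β => F.obj (B' β)) g ∈ J X ∧
      ∀ (α : Fin n) (β : ι), ∃ h : B' β ⟶ Bo α, F.map h = g β ≫ f α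

/-- Property (⋆): the above for all finite families. -/
def StarProperty {B V : Type u} [SmallCategory B] [SmallCategory V]
    (F : B ⥤ V) (J : GrothendieckTopology V) : Prop :=
  ∀ n : ℕ, StarPropertyOn F J n


set_option linter.unusedSectionVars false

section

variable {B V : Type u} [SmallCategory B] [SmallCategory V]
    (J : GrothendieckTopology V) (F : B ⥤ V) [F.Faithful]
    (hF : StarProperty F J)

include hF

theorem star_coverDense : F.IsCoverDense J := by
  constructor
  intro U
  obtain ⟨ι, B', g, hg, -⟩ := hF 0 U Fin.elim0 (fun α => α.elim0)
  refine J.superset_covering ?_ hg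
  rintro Y f ⟨Z, a, b, ⟨i⟩, rfl⟩
  exact ⟨⟨B' i, a, g i, rfl⟩⟩

theorem star_locallyFull : F.IsLocallyFull J := by
  constructor
  intro U Vo f
  obtain ⟨ι, B', g, hg, hfac⟩ := hF 2 (F.obj U) ![U, Vo]
    (fun α => Fin.cases (motive := fun α => F.obj U ⟶ F.obj (![U, Vo] α)) (𝟙 _)
      (fun β => Fin.cases (motive := fun β => F.obj U ⟶ F.obj (![U, Vo] β.succ)) f
        (fun γ => γ.elim0) β) α)
  refine J.superset_covering ?_ hg
  rintro Y p ⟨Z, a, b, ⟨i⟩, rfl⟩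
  obtain ⟨h0, hh0⟩ := hfac 0 i
  obtain ⟨h1, hh1⟩ := hfac (Fin.succ 0) i
  change F.map (X := B' i) (Y := U) h0 = g i ≫ 𝟙 _ at hh0
  rw [Category.comp_id] at hh0
  change F.map (X := B' i) (Y := Vo) h1 = g i ≫ f at hh1
  refine ⟨B' i, h0, a, ⟨h1, ?_⟩, by rw [hh0]⟩
  rw [hh0, hh1]

theorem star_locallyFaithful : F.IsLocallyFaithful J := by
  constructor
  intro U Vo f₁ f₂ e
  obtain rfl := F.map_injective e
  obtain ⟨ι, B', g, hg, hfac⟩ := hF 1 (F.obj U) (fun _ => U) (fun _ => 𝟙 _)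
  refine J.superset_covering ?_ hg
  rintro Y p ⟨Z, a, b, ⟨i⟩, rfl⟩
  obtain ⟨h0, hh0⟩ := hfac 0 i
  rw [Category.comp_id] at hh0
  exact ⟨B' i, h0, a, by simp, by rw [hh0]⟩

theorem star_denseSubsite (K : GrothendieckTopology B)
    (hK : ∀ (X : B) (S : Sieve X), S ∈ K X ↔ S.functorPushforward F ∈ J (F.obj X)) :
    F.IsDenseSubsite K J := by
  haveI := star_coverDense J F hF
  haveI := star_locallyFull J F hF
  haveI := star_locallyFaithful J F hF
  exact { functorPushforward_mem_iff := (hK _ _).symm }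

end

/-- If `(B, F)` is a base for `(V, J)` and `K` is the `F`-induced topology on `B`, then
for every presheaf of sets `P` on `V`, the restriction along `F` of the `J`-sheafification
of `P` is naturally isomorphic to the `K`-sheafification of the restriction of `P`
along `F`: `(P^a) ∘ F^op ≅ (P ∘ F^op)^a`. -/
theorem sheafification_comp_base {B V : Type u} [SmallCategory B] [SmallCategory V]
    (J : GrothendieckTopology V) (F : B ⥤ V) [F.Faithful]
    (hF : StarProperty F J)
    (K : GrothendieckTopology B)
    (hK : ∀ (X : B) (S : Sieve X), S ∈ K X ↔ S.functorPushforward F ∈ J (F.obj X))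
    (P : Vᵒᵖ ⥤ Type u) :
    Nonempty ((F.op ⋙ ((presheafToSheaf J (Type u)).obj P).val) ≅
      ((presheafToSheaf K (Type u)).obj (F.op ⋙ P)).val) := by
  have := star_denseSubsite J F hF K hK
  have e := Functor.IsDenseSubsite.sheafEquivSheafificationCompatibility K J F (Type u)
  exact ⟨((sheafToPresheaf K (Type u)).mapIso (e.app P)).symm⟩
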